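/- Let k' be a field with finite extension k'', let R' = k'[[t]] and R'' = k''[[t]]. Let M → N be a homomorphism of R'-modules whose induced map M_tor → N_tor has cokernel Q of finite dimension over k'. Then the cokernel of the induced map (M ⊗_{R'} R'')_tor → (N ⊗_{R'} R'')_tor is isomorphic to Q ⊗_{R'} R'', and its dimension over k'' equals dim_{k'} Q. -/

import Mathlib

open scoped TensorProduct

set_option maxHeartbeats 1000000
set_option synthInstance.maxHeartbeats 1000000

/-- The cokernel of the map induced on torsion submodules by a linear map `f : M →ₗ[R] N`,
realized as the quotient of `N_tor` by the image of `M_tor` under `f`. -/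
abbrev torsionCoker (R : Type*) [CommRing R] {M N : Type*} [AddCommGroup M] [Module R M]
    [AddCommGroup N] [Module R N] (f : M →ₗ[R] N) : Type _ :=
  ↥(Submodule.torsion R N) ⧸
    ((Submodule.map f (Submodule.torsion R M)).comap (Submodule.torsion R N).subtype)

section E
variable {K K' : Type*} [Field K] [Field K'] [Algebra K K']
variable {ι : Type*} [Fintype ι] [DecidableEq ι] (c : Module.Basis ι K K')

lemma ps_algebraMap_coeff (r : PowerSeries K) (n : ℕ) :
    PowerSeries.coeff (R := K') n (algebraMap (PowerSeries K) (PowerSeries K') r)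
      = algebraMap K K' (PowerSeries.coeff (R := K) n r) :=
  PowerSeries.coeff_map _ _ _

/-- coefficientwise basis decomposition of `K'⟦X⟧` over `K⟦X⟧`. -/
noncomputable def psBasisEquiv : PowerSeries K' ≃ₗ[PowerSeries K] (ι →₀ PowerSeries K) where
  toFun s := Finsupp.equivFunOnFinite.symm fun j =>
    PowerSeries.mk fun n => c.repr (PowerSeries.coeff (R := K') n s) j
  invFun g := PowerSeries.mk fun n => ∑ j, (PowerSeries.coeff (R := K) n (g j)) • c j
  map_add' s t := by
    ext j n
    simp [Finsupp.coe_equivFunOnFinite_symm]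
  map_smul' r s := by
    ext j n
    simp only [Finsupp.coe_equivFunOnFinite_symm, RingHom.id_apply, Finsupp.coe_smul, Pi.smul_apply,
      Equiv.coe_fn_symm_mk, Finsupp.coe_mk, PowerSeries.coeff_mk, smul_eq_mul]
    rw [Algebra.smul_def, PowerSeries.coeff_mul, PowerSeries.coeff_mul, map_sum (c.repr)]
    rw [Finsupp.finset_sum_apply]
    refine Finset.sum_congr rfl fun p _ => ?_
    rw [ps_algebraMap_coeff, ← Algebra.smul_def, map_smul, PowerSeries.coeff_mk]
    simp
  left_inv s := by
    ext n
    simp only [Finsupp.coe_equivFunOnFinite_symm, Equiv.coe_fn_symm_mk, Finsupp.coe_mk,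
      PowerSeries.coeff_mk]
    exact c.sum_repr _
  right_inv g := by
    ext j n
    simp only [Finsupp.coe_equivFunOnFinite_symm, Equiv.coe_fn_symm_mk, Finsupp.coe_mk,
      PowerSeries.coeff_mk, map_sum]
    rw [Finsupp.finset_sum_apply]
    rw [Finset.sum_eq_single j (fun i _ hij => by
      rw [map_smul, Finsupp.smul_apply, c.repr_self, Finsupp.single_apply, if_neg hij, smul_zero])
      (fun h => absurd (Finset.mem_univ j) h)]
    rw [map_smul, Finsupp.smul_apply, c.repr_self, Finsupp.single_apply, if_pos rfl, smul_eq_mul,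
      mul_one]
end E

section T
variable {K K' : Type*} [Field K] [Field K'] [Algebra K K']
variable {ι : Type*} [Fintype ι] [DecidableEq ι] (c : Module.Basis ι K K')
variable (P : Type*) [AddCommGroup P] [Module (PowerSeries K) P]

noncomputable def psTensorEquiv :
    (PowerSeries K' ⊗[PowerSeries K] P) ≃ₗ[PowerSeries K] (ι →₀ P) :=
  (TensorProduct.congr (psBasisEquiv c) (LinearEquiv.refl _ P)).trans
    (TensorProduct.finsuppScalarLeft _ P ι)

lemma psTensorEquiv_tmul (s : PowerSeries K') (p : P) (j : ι) :
    psTensorEquiv c P (s ⊗ₜ p) j = (psBasisEquiv c s j) • p := by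
  simp [psTensorEquiv, TensorProduct.finsuppScalarLeft_apply_tmul_apply]

noncomputable def bS (j : ι) : PowerSeries K' := (psBasisEquiv c).symm (Finsupp.single j 1)

lemma psTensorEquiv_symm_single (j : ι) (p : P) :
    (psTensorEquiv c P).symm (Finsupp.single j p) = bS c j ⊗ₜ p := by
  simp [psTensorEquiv, TensorProduct.finsuppScalarLeft_symm_apply_single, bS]

lemma psTensorEquiv_b_tmul (j : ι) (p : P) :
    psTensorEquiv c P (bS c j ⊗ₜ p) = Finsupp.single j p := by
  rw [← psTensorEquiv_symm_single, LinearEquiv.apply_symm_apply]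

lemma ps_tensor_decomp (x : PowerSeries K' ⊗[PowerSeries K] P) :
    x = (psTensorEquiv c P x).sum fun j p => bS c j ⊗ₜ p := by
  apply (psTensorEquiv c P).injective
  rw [map_finsuppSum]
  rw [Finsupp.sum_congr (fun j _ => psTensorEquiv_b_tmul c P j _)]
  exact (Finsupp.sum_single _).symm

lemma ps_exists_smul_eq_zero (x : PowerSeries K' ⊗[PowerSeries K] P)
    (hx : x ∈ Submodule.torsion (PowerSeries K') (PowerSeries K' ⊗[PowerSeries K] P)) :
    ∃ a : PowerSeries K, a ≠ 0 ∧ a • x = 0 := by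
  obtain ⟨s, hs⟩ := (Submodule.mem_torsion_iff x).mp hx
  have hs0 : (s : PowerSeries K') ≠ 0 := nonZeroDivisors.coe_ne_zero s
  obtain ⟨n, u, hsu⟩ := IsDiscreteValuationRing.eq_unit_mul_pow_irreducible hs0
    PowerSeries.X_irreducible
  refine ⟨(PowerSeries.X : PowerSeries K) ^ n, pow_ne_zero _ PowerSeries.X_ne_zero, ?_⟩
  have hX : algebraMap (PowerSeries K) (PowerSeries K') ((PowerSeries.X : PowerSeries K) ^ n)
      = (PowerSeries.X : PowerSeries K') ^ n := by
    rw [map_pow]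
    exact congrArg (· ^ n) (PowerSeries.map_X _)
  rw [← algebraMap_smul (PowerSeries K') ((PowerSeries.X : PowerSeries K) ^ n) x, hX]
  have hXu : (PowerSeries.X : PowerSeries K') ^ n
      = (u⁻¹ : (PowerSeries K')ˣ) • (s : PowerSeries K') := by
    rw [hsu, Units.smul_def, smul_eq_mul, ← mul_assoc, Units.inv_mul, one_mul]
  rw [hXu, Units.smul_def, smul_eq_mul, mul_smul, ← Submonoid.smul_def, hs, smul_zero]

lemma ps_component_torsion (x : PowerSeries K' ⊗[PowerSeries K] P)
    (hx : x ∈ Submodule.torsion (PowerSeries K') (PowerSeries K' ⊗[PowerSeries K] P)) (j : ι) :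
    psTensorEquiv c P x j ∈ Submodule.torsion (PowerSeries K) P := by
  obtain ⟨a, ha0, ha⟩ := ps_exists_smul_eq_zero P x hx
  refine (Submodule.mem_torsion_iff _).mpr ⟨⟨a, mem_nonZeroDivisors_of_ne_zero ha0⟩, ?_⟩
  have := congrArg (fun y => psTensorEquiv c P y j) ha
  simpa [map_smul] using this

lemma ps_tmul_torsion (s : PowerSeries K') (p : P)
    (hp : p ∈ Submodule.torsion (PowerSeries K) P) :
    s ⊗ₜ p ∈ Submodule.torsion (PowerSeries K') (PowerSeries K' ⊗[PowerSeries K] P) := by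
  obtain ⟨a, ha⟩ := (Submodule.mem_torsion_iff p).mp hp
  have hinj : Function.Injective (algebraMap (PowerSeries K) (PowerSeries K')) := by
    intro r₁ r₂ h
    ext n
    exact (algebraMap K K').injective
      (by simpa [ps_algebraMap_coeff] using congrArg (PowerSeries.coeff (R := K') n) h)
  refine (Submodule.mem_torsion_iff _).mpr
    ⟨⟨algebraMap _ _ (a : PowerSeries K), mem_nonZeroDivisors_of_ne_zero ?_⟩, ?_⟩
  · exact fun h => nonZeroDivisors.coe_ne_zero a (hinj (h.trans (map_zero _).symm))
  · show algebraMap (PowerSeries K) (PowerSeries K') a • (s ⊗ₜ[PowerSeries K] p) = 0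
    rw [algebraMap_smul, TensorProduct.smul_tmul', TensorProduct.smul_tmul, ← Submonoid.smul_def, ha, TensorProduct.tmul_zero]
end T

section Main
variable {K K' : Type*} [Field K] [Field K'] [Algebra K K']
variable {ι : Type*} [Fintype ι] [DecidableEq ι] (c : Module.Basis ι K K')
variable {M N : Type*} [AddCommGroup M] [Module (PowerSeries K) M]
    [AddCommGroup N] [Module (PowerSeries K) N] (f : M →ₗ[PowerSeries K] N)

local notation "RR" => PowerSeries K
local notation "SS" => PowerSeries K'

/-- the map `N_tor → coker_S`, `n ↦ [1 ⊗ n]`. -/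
noncomputable def g0 : Submodule.torsion RR N →ₗ[RR] torsionCoker SS (f.baseChange SS) where
  toFun n := Submodule.Quotient.mk ⟨(1 : SS) ⊗ₜ[RR] (n : N), ps_tmul_torsion N 1 n n.2⟩
  map_add' a b := by
    rw [← Submodule.Quotient.mk_add]
    exact congrArg _ (Subtype.ext (by simp [TensorProduct.tmul_add]))
  map_smul' r a := by
    rw [RingHom.id_apply, ← Submodule.Quotient.mk_smul]
    refine congrArg Submodule.Quotient.mk (Subtype.ext ?_)
    show (1:SS) ⊗ₜ[RR] (r • (a:N)) = r • ((1:SS) ⊗ₜ[RR] (a:N))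
    rw [TensorProduct.tmul_smul]

lemma g0_ker : ((Submodule.map f (Submodule.torsion RR M)).comap
    (Submodule.torsion RR N).subtype) ≤ LinearMap.ker (g0 (K' := K') f) := by
  rintro ⟨n, hn⟩ hmem
  obtain ⟨m, hm, hfm⟩ := hmem
  have heq : g0 f ⟨n, hn⟩ = (Submodule.Quotient.mk
      ⟨(1 : SS) ⊗ₜ[RR] n, ps_tmul_torsion N 1 (⟨n, hn⟩ : Submodule.torsion RR N) hn⟩ :
      torsionCoker SS (f.baseChange SS)) := rfl
  rw [LinearMap.mem_ker, heq, Submodule.Quotient.mk_eq_zero]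
  refine ⟨(1 : SS) ⊗ₜ[RR] m, ps_tmul_torsion M 1 m hm, ?_⟩
  show f.baseChange SS ((1 : SS) ⊗ₜ[RR] m) = (1 : SS) ⊗ₜ[RR] n
  rw [LinearMap.baseChange_tmul, hfm]
  rfl

/-- the `S`-linear map `S ⊗ Q → coker_S`. -/
noncomputable def alpha : (SS ⊗[RR] torsionCoker RR f) →ₗ[SS] torsionCoker SS (f.baseChange SS) :=
  LinearMap.liftBaseChange SS (Submodule.liftQ _ (g0 f) (g0_ker f))

lemma alpha_tmul (s : SS) (n : Submodule.torsion RR N) :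
    alpha f (s ⊗ₜ Submodule.Quotient.mk n)
      = Submodule.Quotient.mk ⟨s ⊗ₜ[RR] (n : N), ps_tmul_torsion N s n n.2⟩ := by
  rw [alpha, LinearMap.liftBaseChange_tmul, Submodule.liftQ_apply]
  show s • (Submodule.Quotient.mk ⟨(1 : SS) ⊗ₜ[RR] (n : N), ps_tmul_torsion N 1 n n.2⟩ :
      torsionCoker SS (f.baseChange SS)) = _
  rw [← Submodule.Quotient.mk_smul]
  refine congrArg _ (Subtype.ext ?_)
  show s • ((1:SS) ⊗ₜ[RR] (n:N)) = s ⊗ₜ[RR] (n:N)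
  rw [TensorProduct.smul_tmul', smul_eq_mul, mul_one]

include c in
lemma alpha_surjective : Function.Surjective (alpha (K' := K') f) := by
  classical
  intro y
  obtain ⟨⟨x, hx⟩, rfl⟩ := Submodule.Quotient.mk_surjective _ y
  refine ⟨∑ j ∈ (psTensorEquiv c N x).support.attach,
      bS c j.1 ⊗ₜ (Submodule.Quotient.mk
        ⟨psTensorEquiv c N x j.1, ps_component_torsion c N x hx j.1⟩ :
        torsionCoker RR f), ?_⟩
  rw [map_sum]
  have h1 : ∀ j ∈ (psTensorEquiv c N x).support.attach,
      alpha f (bS c j.1 ⊗ₜ (Submodule.Quotient.mk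
        ⟨psTensorEquiv c N x j.1, ps_component_torsion c N x hx j.1⟩ : torsionCoker RR f))
      = Submodule.Quotient.mk ⟨bS c j.1 ⊗ₜ[RR] psTensorEquiv c N x j.1,
          ps_tmul_torsion N _ _ (ps_component_torsion c N x hx j.1)⟩ :=
    fun j _ => alpha_tmul f _ _
  rw [Finset.sum_congr rfl h1]
  have h2 : (∑ j ∈ (psTensorEquiv c N x).support.attach,
      (⟨bS c j.1 ⊗ₜ[RR] psTensorEquiv c N x j.1,
        ps_tmul_torsion N _ _ (ps_component_torsion c N x hx j.1)⟩ :
        Submodule.torsion SS (SS ⊗[RR] N))) = ⟨x, hx⟩ := by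
    refine Subtype.ext ?_
    rw [AddSubmonoidClass.coe_finset_sum]
    rw [Finset.sum_attach _ (fun j => bS c j ⊗ₜ[RR] psTensorEquiv c N x j)]
    exact (ps_tensor_decomp c N x).symm
  simp only [← Submodule.mkQ_apply]
  rw [← map_sum, h2]

lemma sum_single_eval {P : Type*} [AddCommGroup P] (s : Finset ι) (v : ι → P) (j0 : ι) :
    (∑ j ∈ s, Finsupp.single j (v j)) j0 = if j0 ∈ s then v j0 else 0 := by
  classical
  rw [Finsupp.finset_sum_apply]
  rw [Finset.sum_congr rfl (fun j _ => Finsupp.single_apply)]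
  exact Finset.sum_ite_eq' s j0 v

include c in
lemma alpha_injective : Function.Injective (alpha (K' := K') f) := by
  classical
  rw [injective_iff_map_eq_zero]
  intro z hz
  set q := psTensorEquiv c (torsionCoker RR f) z with hq
  have hlift : ∀ j : ι, ∃ n : Submodule.torsion RR N, Submodule.Quotient.mk n = q j :=
    fun j => Submodule.Quotient.mk_surjective _ (q j)
  choose nf hnf using hlift
  -- w and its torsion property
  have hwtor : (∑ j ∈ q.support, bS c j ⊗ₜ[RR] (nf j : N))
      ∈ Submodule.torsion SS (SS ⊗[RR] N) :=
    Submodule.sum_mem _ fun j _ => ps_tmul_torsion N _ _ (nf j).2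
  -- alpha z = mk ⟨w, hwtor⟩
  have hzdec : z = ∑ j ∈ q.support, bS c j ⊗ₜ (q j) := by
    conv_lhs => rw [ps_tensor_decomp c (torsionCoker RR f) z]
    rfl
  have hAz : alpha f z = Submodule.Quotient.mk
      ⟨∑ j ∈ q.support, bS c j ⊗ₜ[RR] (nf j : N), hwtor⟩ := by
    conv_lhs => rw [hzdec]
    rw [map_sum]
    have h1 : ∀ j ∈ q.support,
        alpha f (bS c j ⊗ₜ (q j))
        = Submodule.Quotient.mk ⟨bS c j ⊗ₜ[RR] (nf j : N),
            ps_tmul_torsion N _ _ (nf j).2⟩ := by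
      intro j _
      rw [← hnf j]
      exact alpha_tmul f _ _
    rw [Finset.sum_congr rfl h1]
    simp only [← Submodule.mkQ_apply, ← map_sum]
    congr 1
    exact Subtype.ext (by rw [AddSubmonoidClass.coe_finset_sum])
  rw [hAz, Submodule.Quotient.mk_eq_zero] at hz
  obtain ⟨v, hv, hfv⟩ := hz
  -- decompose v
  have hvdec : v = ∑ j ∈ (psTensorEquiv c M v).support, bS c j ⊗ₜ (psTensorEquiv c M v j) := by
    conv_lhs => rw [ps_tensor_decomp c M v]
    rfl
  have hfveq : ∑ j ∈ (psTensorEquiv c M v).support,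
      Finsupp.single j (f (psTensorEquiv c M v j))
      = ∑ j ∈ q.support, Finsupp.single j ((nf j : N)) := by
    have := congrArg (psTensorEquiv c N) hfv
    rw [show f.baseChange SS v = ∑ j ∈ (psTensorEquiv c M v).support,
        bS c j ⊗ₜ[RR] f (psTensorEquiv c M v j) by
      conv_lhs => rw [hvdec]
      rw [map_sum]
      exact Finset.sum_congr rfl fun j _ => by rw [LinearMap.baseChange_tmul]] at this
    rw [map_sum] at this
    rw [Finset.sum_congr rfl
      (fun j _ => psTensorEquiv_b_tmul c N j (f (psTensorEquiv c M v j)))] at this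
    rw [show ((Submodule.torsion SS (SS ⊗[RR] N)).subtype
        ⟨∑ j ∈ q.support, bS c j ⊗ₜ[RR] (nf j : N), hwtor⟩)
        = ∑ j ∈ q.support, bS c j ⊗ₜ[RR] (nf j : N) from rfl] at this
    rw [map_sum, Finset.sum_congr rfl
      (fun j _ => psTensorEquiv_b_tmul c N j ((nf j : N)))] at this
    exact this
  -- each component of q vanishes
  have hqz : q = 0 := by
    ext j0
    by_cases hj : j0 ∈ q.support
    · have h3 := congrArg (fun g => g j0) hfveq
      rw [sum_single_eval, sum_single_eval, if_pos hj] at h3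
      have hnval : (nf j0 : N) = f (psTensorEquiv c M v j0) := by
        by_cases hm : j0 ∈ (psTensorEquiv c M v).support
        · rw [if_pos hm] at h3; exact h3.symm
        · rw [if_neg hm] at h3
          rw [Finsupp.notMem_support_iff.mp hm, map_zero]
          exact h3.symm
      have : q j0 = 0 := by
        rw [← hnf j0, Submodule.Quotient.mk_eq_zero]
        exact ⟨psTensorEquiv c M v j0, ps_component_torsion c M v hv j0, hnval.symm⟩
      exact this
    · exact Finsupp.notMem_support_iff.mp hj
  have : z = 0 := by
    have := congrArg (psTensorEquiv c (torsionCoker RR f)).symm (hq.symm.trans hqz)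
    simpa using this
  exact this

noncomputable def mainIso :
    (torsionCoker SS (f.baseChange SS)) ≃ₗ[SS] (SS ⊗[RR] torsionCoker RR f) :=
  (LinearEquiv.ofBijective (alpha f) ⟨alpha_injective c f, alpha_surjective c f⟩).symm

include c in
lemma finrank_coker_eq
    [@FiniteDimensional K (RestrictScalars K (PowerSeries K) (torsionCoker (PowerSeries K) f)) _ _
      (RestrictScalars.module K (PowerSeries K) (torsionCoker (PowerSeries K) f))] :
    Module.finrank K' (RestrictScalars K' SS (torsionCoker SS (f.baseChange SS)))
      = Module.finrank K (RestrictScalars K RR (torsionCoker RR f)) := by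
  classical
  set Qt := torsionCoker RR f with hQt
  set B := RestrictScalars K RR Qt with hB
  set V := RestrictScalars K' SS (torsionCoker SS (f.baseChange SS)) with hV
  letI instKV : Module K V := Module.compHom V (algebraMap K K')
  haveI : IsScalarTower K K' V := by
    refine ⟨fun a a' v => ?_⟩
    show ((a • a') : K') • v = (algebraMap K K' a) • (a' • v)
    rw [Algebra.smul_def, mul_smul]
  -- the K-linear equivalence V ≃ (ι →₀ B)
  have halg : ∀ a : K, algebraMap K SS a = algebraMap RR SS (algebraMap K RR a) := by
    intro a
    rw [PowerSeries.algebraMap_apply (R := K) (A := K'),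
      PowerSeries.algebraMap_apply (R := K) (A := K)]
    show PowerSeries.C (R := K') (algebraMap K K' a)
      = PowerSeries.map (algebraMap K K') (PowerSeries.C (R := K) (algebraMap K K a))
    rw [PowerSeries.map_C, Algebra.algebraMap_self_apply]
  let E0 := RestrictScalars.addEquiv K' SS (torsionCoker SS (f.baseChange SS))
  let E1 := (mainIso c f).toAddEquiv
  let E2 := (psTensorEquiv c Qt).toAddEquiv
  let E3 : (ι →₀ Qt) ≃+ (ι →₀ B) :=
    Finsupp.mapRange.addEquiv (RestrictScalars.addEquiv K RR Qt).symm
  let Etot : V ≃+ (ι →₀ B) := E0.trans (E1.trans (E2.trans E3))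
  have hsmul : ∀ (a : K) (v : V), Etot (a • v) = a • Etot v := by
    intro a v
    have h0 : E0 (a • v) = algebraMap K SS a • E0 v := by
      show E0 ((algebraMap K K' a) • v) = _
      rw [RestrictScalars.addEquiv_map_smul, ← IsScalarTower.algebraMap_apply]
    have h1 : E1 (algebraMap K SS a • E0 v) = (algebraMap K RR a) • E1 (E0 v) := by
      rw [show E1 (algebraMap K SS a • E0 v)
          = (mainIso c f) (algebraMap K SS a • E0 v) from rfl, map_smul, halg,
        algebraMap_smul]
      rfl
    have h2 : E2 ((algebraMap K RR a) • E1 (E0 v))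
        = (algebraMap K RR a) • E2 (E1 (E0 v)) := by
      rw [show E2 ((algebraMap K RR a) • E1 (E0 v))
          = (psTensorEquiv c Qt) ((algebraMap K RR a) • E1 (E0 v)) from rfl, map_smul]
      rfl
    have h3 : E3 ((algebraMap K RR a) • E2 (E1 (E0 v))) = a • E3 (E2 (E1 (E0 v))) := by
      ext j
      show (RestrictScalars.addEquiv K RR Qt).symm (((algebraMap K RR a) • E2 (E1 (E0 v))) j)
        = (a • (E3 (E2 (E1 (E0 v))))) j
      rw [Finsupp.smul_apply, Finsupp.smul_apply,
        RestrictScalars.addEquiv_symm_map_algebraMap_smul]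
      rfl
    show E3 (E2 (E1 (E0 (a • v)))) = a • E3 (E2 (E1 (E0 v)))
    rw [h0, h1, h2, h3]
  let Elin : V ≃ₗ[K] (ι →₀ B) := AddEquiv.toLinearEquiv Etot hsmul
  haveI hfinB : Module.Finite K B := by assumption
  haveI : Module.Free K B := @Module.Free.of_divisionRing K B _ _ (RestrictScalars.module K RR Qt)
  have hrank : Module.finrank K V = Fintype.card ι * Module.finrank K B := by
    rw [Elin.finrank_eq, (Finsupp.linearEquivFunOnFinite K B ι).finrank_eq,
      Module.finrank_pi_fintype K (M := fun _ : ι => B), Finset.sum_const, smul_eq_mul,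
      Finset.card_univ]
  haveI : Module.Free K' V := @Module.Free.of_divisionRing K' V _ _
    (RestrictScalars.module K' SS (torsionCoker SS (f.baseChange SS)))
  have htower : Module.finrank K K' * Module.finrank K' V = Module.finrank K V :=
    Module.finrank_mul_finrank K K' V
  have hcard : Module.finrank K K' = Fintype.card ι := Module.finrank_eq_card_basis c
  have hpos : 0 < Fintype.card ι :=
    Fintype.card_pos_iff.mpr c.index_nonempty
  have : Fintype.card ι * Module.finrank K' V = Fintype.card ι * Module.finrank K B := by
    rw [← hcard, htower, hrank, hcard]
  exact Nat.eq_of_mul_eq_mul_left hpos this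
end Main

/-- for a finite extension `k''/k'`, with `R' = k'⟦t⟧` and `R'' = k''⟦t⟧`,
and a map `M → N` of `R'`-modules whose induced map on torsion has cokernel `Q` of finite
dimension over `k'`, the cokernel of the induced map `(M ⊗ R'')_tor → (N ⊗ R'')_tor` is
isomorphic to `Q ⊗_{R'} R''` and has `k''`-dimension equal to `dim_{k'} Q`. -/
theorem torsionCoker_baseChange
    (K K' : Type*) [Field K] [Field K'] [Algebra K K'] [FiniteDimensional K K']
    (M N : Type*) [AddCommGroup M] [Module (PowerSeries K) M]
    [AddCommGroup N] [Module (PowerSeries K) N]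
    (f : M →ₗ[PowerSeries K] N)
    [@FiniteDimensional K (RestrictScalars K (PowerSeries K) (torsionCoker (PowerSeries K) f)) _ _
      (RestrictScalars.module K (PowerSeries K) (torsionCoker (PowerSeries K) f))] :
    Nonempty ((torsionCoker (PowerSeries K') (f.baseChange (PowerSeries K'))) ≃ₗ[PowerSeries K']
        (PowerSeries K' ⊗[PowerSeries K] torsionCoker (PowerSeries K) f)) ∧
    Module.finrank K' (RestrictScalars K' (PowerSeries K')
        (torsionCoker (PowerSeries K') (f.baseChange (PowerSeries K')))) =
      Module.finrank K (RestrictScalars K (PowerSeries K) (torsionCoker (PowerSeries K) f)) := by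
  classical
  let c := Module.finBasis K K'
  exact ⟨⟨mainIso c f⟩, finrank_coker_eq c f⟩
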